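/- For all a, b > 0 with a ≠ b, A(a,b) - L(a,b) ≤ 2·(N₂(a,b) - L(a,b)), i.e. 2N₂(a,b) ≥ A(a,b) + L(a,b). -/

import Mathlib

private lemma denom_pos {x : ℝ} (hx : 0 < x) : 0 < x^2 + 4*x + 1 := by nlinarith

private lemma hasDeriv_aux (x : ℝ) (hx : 0 < x) :
    HasDerivAt (fun y => Real.log y - 3*(y^2-1)/(y^2+4*y+1))
      (1/x - (6*x*(x^2+4*x+1) - 3*(x^2-1)*(2*x+4))/(x^2+4*x+1)^2) x := by
  have h1 : HasDerivAt Real.log (1/x) x := by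
    simpa [one_div] using Real.hasDerivAt_log (ne_of_gt hx)
  have h2 : HasDerivAt (fun y : ℝ => 3*(y^2-1)) (6*x) x := by
    have := ((hasDerivAt_pow 2 x).sub_const 1).const_mul 3
    refine this.congr_deriv ?_
    ring
  have h3 : HasDerivAt (fun y : ℝ => y^2+4*y+1) (2*x+4) x := by
    have := ((hasDerivAt_pow 2 x).add ((hasDerivAt_id x).const_mul 4)).add_const 1
    refine this.congr_deriv ?_
    ring
  have h4 := h2.div h3 (ne_of_gt (denom_pos hx))
  exact h1.sub h4

private lemma log_ge_pade {t : ℝ} (ht : 1 ≤ t) :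
    3*(t^2-1)/(t^2+4*t+1) ≤ Real.log t := by
  set f : ℝ → ℝ := fun y => Real.log y - 3*(y^2-1)/(y^2+4*y+1) with hf
  have hcont : ContinuousOn f (Set.Ici 1) := by
    apply ContinuousOn.sub
    · exact Real.continuousOn_log.mono (by
        intro x hx
        simp only [Set.mem_Ici, Set.mem_compl_iff, Set.mem_singleton_iff] at hx ⊢
        intro h; rw [h] at hx; linarith)
    · apply ContinuousOn.div (by fun_prop) (by fun_prop)
      intro x hx
      simp only [Set.mem_Ici] at hx
      exact ne_of_gt (denom_pos (lt_of_lt_of_le one_pos hx))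
  have hdiff : DifferentiableOn ℝ f (interior (Set.Ici 1)) := by
    rw [interior_Ici]
    intro x hx
    exact (hasDeriv_aux x (lt_trans one_pos hx)).differentiableAt.differentiableWithinAt
  have hderiv : ∀ x ∈ interior (Set.Ici (1:ℝ)), 0 ≤ deriv f x := by
    rw [interior_Ici]
    intro x hx
    have hx0 : 0 < x := lt_trans one_pos hx
    rw [(hasDeriv_aux x hx0).deriv]
    have hv : 0 < x^2 + 4*x + 1 := denom_pos hx0
    have hkey : 1/x - (6*x*(x^2+4*x+1) - 3*(x^2-1)*(2*x+4))/(x^2+4*x+1)^2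
        = (x-1)^4/(x*(x^2+4*x+1)^2) := by
      field_simp
      ring
    rw [hkey]
    positivity
  have hmono : MonotoneOn f (Set.Ici 1) :=
    monotoneOn_of_deriv_nonneg (convex_Ici 1) hcont hdiff hderiv
  have h1 : f 1 ≤ f t := hmono (Set.self_mem_Ici) ht ht
  have hf1 : f 1 = 0 := by norm_num [hf]
  rw [hf1] at h1
  simpa [hf, sub_nonneg] using h1

private lemma log_lower {u v : ℝ} (hu : 0 < u) (huv : u ≤ v) :
    6*(v^2-u^2)/(u^2+4*u*v+v^2) ≤ 2*(Real.log v - Real.log u) := by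
  have hv : 0 < v := lt_of_lt_of_le hu huv
  have ht : 1 ≤ v/u := (one_le_div hu).mpr huv
  have hkey := log_ge_pade ht
  rw [Real.log_div (ne_of_gt hv) (ne_of_gt hu)] at hkey
  have hd1 : 0 < (v/u)^2+4*(v/u)+1 := denom_pos (lt_of_lt_of_le one_pos ht)
  have hd2 : 0 < u^2+4*u*v+v^2 := by positivity
  have heq : 3*((v/u)^2-1)/((v/u)^2+4*(v/u)+1) = 3*(v^2-u^2)/(u^2+4*u*v+v^2) := by
    rw [div_eq_div_iff hd1.ne' hd2.ne']
    field_simp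
    ring
  rw [heq] at hkey
  rw [show 6*(v^2-u^2)/(u^2+4*u*v+v^2) = 2*(3*(v^2-u^2)/(u^2+4*u*v+v^2)) from by ring]
  linarith

private lemma main_lt (a b : ℝ) (ha : 0 < a) (hb : 0 < b) (h : a < b) :
    (a + b) / 2 - (b - a) / (Real.log b - Real.log a) ≤
      2 * (((Real.sqrt a + Real.sqrt b) / 2) * Real.sqrt ((a + b) / 2) -
        (b - a) / (Real.log b - Real.log a)) := by
  set u := Real.sqrt a with hu
  set v := Real.sqrt b with hv
  have hu0 : 0 < u := Real.sqrt_pos.mpr ha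
  have hv0 : 0 < v := Real.sqrt_pos.mpr hb
  have hu2 : u^2 = a := Real.sq_sqrt ha.le
  have hv2 : v^2 = b := Real.sq_sqrt hb.le
  have huv : u ≤ v := Real.sqrt_le_sqrt h.le
  have hab : Real.sqrt (a*b) = u * v := Real.sqrt_mul ha.le b
  have hlg : 0 < Real.log b - Real.log a := sub_pos.mpr (Real.log_lt_log ha h)
  have hlogu : Real.log u = Real.log a / 2 := Real.log_sqrt ha.le
  have hlogv : Real.log v = Real.log b / 2 := Real.log_sqrt hb.le
  -- Step A : L ≤ (a + b + 4√(ab))/6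
  have hA : (b - a) / (Real.log b - Real.log a) ≤ (a + b + 4*Real.sqrt (a*b))/6 := by
    rw [div_le_iff₀ hlg]
    have h1 := log_lower hu0 huv
    rw [hlogu, hlogv] at h1
    have hd2 : 0 < u^2+4*u*v+v^2 := by positivity
    rw [div_le_iff₀ hd2] at h1
    have hba : b - a = v^2 - u^2 := by rw [hu2, hv2]
    rw [hab, hba]
    nlinarith [h1]
  -- Step B : A + (a+b+4√(ab))/6 ≤ 2 N₂
  set w := Real.sqrt ((a+b)/2) with hw
  have hw0 : 0 ≤ w := Real.sqrt_nonneg _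
  have hw2 : w^2 = (a+b)/2 := Real.sq_sqrt (by positivity)
  have hB : (a + b)/2 + (a + b + 4*Real.sqrt (a*b))/6 ≤ 2 * (((u + v)/2) * w) := by
    rw [hab]
    have hc : (a + b)/2 + (a + b + 4*(u*v))/6 = 2/3 * (u^2 + u*v + v^2) := by
      rw [← hu2, ← hv2]; ring
    rw [hc]
    have hsq : (2/3 * (u^2 + u*v + v^2))^2 ≤ (2 * (((u + v)/2) * w))^2 := by
      have : (2 * (((u + v)/2) * w))^2 = (u+v)^2 * w^2 := by ring
      rw [this, hw2, ← hu2, ← hv2]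
      nlinarith [sq_nonneg (u - v), sq_nonneg (u + v), mul_pos hu0 hv0,
        mul_nonneg (mul_nonneg hu0.le hv0.le) (sq_nonneg (u - v))]
    have hc0 : 0 ≤ 2/3 * (u^2 + u*v + v^2) := by positivity
    have hd0 : 0 ≤ 2 * (((u + v)/2) * w) := by positivity
    nlinarith [hsq, hc0, hd0]
  linarith

theorem MAL_le_two_MN2L (a b : ℝ) (ha : 0 < a) (hb : 0 < b) (hab : a ≠ b) :
    (a + b) / 2 - (b - a) / (Real.log b - Real.log a) ≤
      2 * (((Real.sqrt a + Real.sqrt b) / 2) * Real.sqrt ((a + b) / 2) -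
        (b - a) / (Real.log b - Real.log a)) := by
  rcases lt_or_gt_of_ne hab with h | h
  · exact main_lt a b ha hb h
  · have hmain := main_lt b a hb ha h
    have e1 : (a - b) / (Real.log a - Real.log b) = (b - a) / (Real.log b - Real.log a) := by
      rw [← neg_div_neg_eq]; ring_nf
    rw [add_comm b a, add_comm (Real.sqrt b) (Real.sqrt a), e1] at hmain
    exact hmain
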